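/- The semi-discrete Alfvénic system with the orthogonality-preserving projected cross product conserves magnetic helicity: if A_h ∈ V₁ satisfies ∇×A_h = B_h and ∂_t B_h = ∇×P₁(v_h × P₁(B_h)), then d/dt ∫ A_h · B_h = 0. -/
import Mathlib


open MeasureTheory

/-- Magnetic-helicity conservation of the semi-discrete Alfvénic step with the
orthogonality-preserving projected cross product: if `∇×A_h = B_h` and
`∂ₜB_h = ∇×P₁(v_h × P₁ B_h)`, then `d/dt ∫ A_h·B_h = 0`. -/
theorem helicity_conservation
    {Ω : Type*} [MeasureSpace Ω]
    (V₁ : Submodule ℝ (Ω → Fin 3 → ℝ))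
    (inner1 : (Ω → Fin 3 → ℝ) → (Ω → Fin 3 → ℝ) → ℝ)
    (hsymm : ∀ u v, inner1 u v = inner1 v u)
    (P₁ : (Ω → Fin 3 → ℝ) → (Ω → Fin 3 → ℝ))
    (hPmem : ∀ d, P₁ d ∈ V₁)
    (hPdef : ∀ d, ∀ a ∈ V₁, inner1 (P₁ d) a = ∫ x, ∑ i, d x i * a x i)
    (Curl : (Ω → Fin 3 → ℝ) → (Ω → Fin 3 → ℝ))
    (A B B' v : ℝ → Ω → Fin 3 → ℝ)
    (hcurlA : ∀ t, Curl (A t) = B t)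
    (hibp : ∀ t (w : Ω → Fin 3 → ℝ),
      (∫ x, ∑ i, A t x i * Curl w x i) = ∫ x, ∑ i, Curl (A t) x i * w x i)
    (hB' : ∀ t x, B' t x =
      Curl (P₁ (fun y => crossProduct (v t y) (P₁ (B t) y))) x)
    (H : ℝ → ℝ)
    (hH : H = fun t => ∫ x, ∑ i, A t x i * B t x i)
    (hH' : ∀ t, HasDerivAt H (2 * ∫ x, ∑ i, A t x i * B' t x i) t) :
    ∀ t, HasDerivAt H 0 t := by
  intro t
  set w : Ω → Fin 3 → ℝ := P₁ (fun y => crossProduct (v t y) (P₁ (B t) y)) with hw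
  have key : (∫ x, ∑ i, A t x i * B' t x i) = 0 := by
    have h1 : (∫ x, ∑ i, A t x i * B' t x i) = ∫ x, ∑ i, A t x i * Curl w x i := by
      congr 1; funext x; congr 1; funext i; rw [hB' t x]
    have h2 : (∫ x, ∑ i, Curl (A t) x i * w x i) = ∫ x, ∑ i, B t x i * w x i := by
      rw [hcurlA]
    have h3 : (∫ x, ∑ i, B t x i * w x i) = inner1 (P₁ (B t)) w :=
      (hPdef (B t) w (hPmem _)).symm
    have h4 : inner1 (P₁ (B t)) w = inner1 w (P₁ (B t)) := hsymm _ _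
    have h5 : inner1 w (P₁ (B t)) =
        ∫ x, ∑ i, crossProduct (v t x) (P₁ (B t) x) i * P₁ (B t) x i :=
      hPdef _ _ (hPmem _)
    have h6 : (∫ x, ∑ i, crossProduct (v t x) (P₁ (B t) x) i * P₁ (B t) x i) = 0 := by
      have : ∀ x : Ω, (∑ i, crossProduct (v t x) (P₁ (B t) x) i * P₁ (B t) x i) = 0 := by
        intro x
        have := dot_cross_self (v t x) (P₁ (B t) x)
        simpa [dotProduct, mul_comm] using this
      simp only [this, integral_zero]
    rw [h1, hibp, h2, h3, h4, h5, h6]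
  have := hH' t
  rwa [key, mul_zero] at this
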